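/- (Generalized shift-and-add property.) Let q be a primitive polynomial of degree k over F₂ and let s be a nonzero binary sequence generated by q (an m-sequence). Then for any polynomial f ∈ F₂[X] with gcd(q, f) = 1, the sequence f(E)s is a cyclic shift of s: there exists j ≥ 0 such that f(E)s = E^j s, i.e., (f(E)s)(i) = s(i+j) for all i. -/

import Mathlib

open Polynomial

noncomputable def polyApp (f : Polynomial (ZMod 2)) (s : ℕ → ZMod 2) : ℕ → ZMod 2 :=
  fun i => f.sum fun j c => c * s (i + j)

def IsExponent (f : Polynomial (ZMod 2)) (e : ℕ) : Prop :=
  0 < e ∧ f ∣ X ^ e - 1 ∧ ∀ m, 0 < m → f ∣ X ^ m - 1 → e ≤ m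

def IsPrimitivePoly (f : Polynomial (ZMod 2)) (k : ℕ) : Prop :=
  Irreducible f ∧ f.natDegree = k ∧ f.coeff 0 ≠ 0 ∧ IsExponent f (2 ^ k - 1)



lemma polyApp_eq' (f : Polynomial (ZMod 2)) (s : ℕ → ZMod 2) (i N : ℕ) (h : f.natDegree < N) :
    polyApp f s i = ∑ j ∈ Finset.range N, f.coeff j * s (i + j) :=
  Polynomial.sum_over_range' f (fun n => by rw [zero_mul]) N h

lemma polyApp_add (f g : Polynomial (ZMod 2)) (s : ℕ → ZMod 2) (i : ℕ) :
    polyApp (f + g) s i = polyApp f s i + polyApp g s i := by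
  unfold polyApp
  exact Polynomial.sum_add_index f g _ (fun _ => zero_mul _) (fun _ _ _ => add_mul _ _ _)

lemma polyApp_zero (s : ℕ → ZMod 2) : polyApp 0 s = 0 := by
  funext i; simp [polyApp]

lemma polyApp_C_mul (a : ZMod 2) (g : Polynomial (ZMod 2)) (s : ℕ → ZMod 2) (i : ℕ) :
    polyApp (C a * g) s i = a * polyApp g s i := by
  rw [polyApp_eq' _ s i (g.natDegree + 1) (lt_of_le_of_lt (natDegree_C_mul_le a g) (Nat.lt_succ_self _)),
      polyApp_eq' g s i (g.natDegree + 1) (Nat.lt_succ_self _), Finset.mul_sum]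
  simp [coeff_C_mul, mul_assoc]

lemma polyApp_X_mul (g : Polynomial (ZMod 2)) (s : ℕ → ZMod 2) (i : ℕ) :
    polyApp (X * g) s i = polyApp g s (i + 1) := by
  have h1 : (X * g).natDegree < g.natDegree + 2 := by
    have := natDegree_mul_le (p := (X : Polynomial (ZMod 2))) (q := g)
    rw [natDegree_X] at this
    omega
  rw [polyApp_eq' _ s i (g.natDegree + 2) h1,
      polyApp_eq' g s (i + 1) (g.natDegree + 1) (Nat.lt_succ_self _),
      Finset.sum_range_succ']
  simp only [coeff_X_mul, Polynomial.coeff_X_mul_zero, zero_mul, add_zero]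
  apply Finset.sum_congr rfl
  intro j _
  have : i + (j + 1) = i + 1 + j := by omega
  rw [this]

lemma polyApp_Xpow_mul (n : ℕ) (g : Polynomial (ZMod 2)) (s : ℕ → ZMod 2) (i : ℕ) :
    polyApp (X ^ n * g) s i = polyApp g s (i + n) := by
  induction n generalizing i with
  | zero => simp
  | succ n ih =>
    have : (X : Polynomial (ZMod 2)) ^ (n+1) * g = X * (X ^ n * g) := by ring
    rw [this, polyApp_X_mul, ih]
    congr 1
    omega

lemma polyApp_one (t : ℕ → ZMod 2) (i : ℕ) : polyApp 1 t i = t i := by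
  unfold polyApp
  rw [show (1 : Polynomial (ZMod 2)) = monomial 0 1 by simp]
  exact (Polynomial.sum_monomial_index 1 (fun j c => c * t (i+j)) (zero_mul _)).trans (by simp)

lemma polyApp_mul (f g : Polynomial (ZMod 2)) (s : ℕ → ZMod 2) :
    ∀ i, polyApp (f * g) s i = polyApp f (polyApp g s) i := by
  induction f using Polynomial.induction_on' with
  | add p r hp hr =>
    intro i
    rw [add_mul, polyApp_add, polyApp_add, hp, hr]
  | monomial n a =>
    intro i
    rw [← Polynomial.C_mul_X_pow_eq_monomial, mul_assoc, polyApp_C_mul, polyApp_Xpow_mul]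
    rw [show (C a * X ^ n : Polynomial (ZMod 2)) = X ^ n * C a by ring, polyApp_Xpow_mul,
      show (C a : Polynomial (ZMod 2)) = C a * 1 by ring, polyApp_C_mul]
    rw [polyApp_one]

lemma polyApp_dvd_zero (q g : Polynomial (ZMod 2)) (s : ℕ → ZMod 2)
    (hqs : polyApp q s = 0) (h : q ∣ g) : ∀ i, polyApp g s i = 0 := by
  obtain ⟨h', rfl⟩ := h
  intro i
  rw [show q * h' = h' * q by ring, polyApp_mul, hqs]
  simp [polyApp, Polynomial.sum]


theorem shift_and_add_main (q : Polynomial (ZMod 2)) (k : ℕ)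
    (hirr : Irreducible q) (hdeg : q.natDegree = k) (hc0 : q.coeff 0 ≠ 0)
    (hepos : 0 < 2 ^ k - 1) (hdvd : q ∣ X ^ (2 ^ k - 1) - 1)
    (hmin : ∀ m, 0 < m → q ∣ X ^ m - 1 → 2 ^ k - 1 ≤ m)
    (f : Polynomial (ZMod 2)) (hgcd : EuclideanDomain.gcd q f = 1) :
    ∃ j : ℕ, q ∣ f - X ^ j := by
  have hq0 : q ≠ 0 := hirr.ne_zero
  haveI : Fact (Irreducible q) := ⟨hirr⟩
  set K := AdjoinRoot q with hK
  let pb : PowerBasis (ZMod 2) K := AdjoinRoot.powerBasis hq0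
  have hpbdim : pb.dim = q.natDegree := AdjoinRoot.powerBasis_dim hq0
  haveI : Fintype K := Module.fintypeOfFintype pb.basis
  have hcard : Fintype.card K = 2 ^ k := by
    rw [Module.card_fintype pb.basis, ZMod.card, Fintype.card_fin,
      hpbdim, hdeg]
  set r : K := AdjoinRoot.root q with hr
  have hmk : ∀ m : ℕ, AdjoinRoot.mk q (X ^ m - 1) = r ^ m - 1 := by
    intro m; simp [hr]
  have h1 : r ^ (2 ^ k - 1) = 1 := by
    have := AdjoinRoot.mk_eq_zero.mpr hdvd
    rw [hmk, sub_eq_zero] at this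
    exact this
  have hford : IsOfFinOrder r := isOfFinOrder_iff_pow_eq_one.mpr ⟨_, hepos, h1⟩
  have hle : 2 ^ k - 1 ≤ orderOf r := by
    refine hmin _ hford.orderOf_pos (AdjoinRoot.mk_eq_zero.mp ?_)
    rw [hmk, sub_eq_zero]
    exact pow_orderOf_eq_one r
  have hord : orderOf r = 2 ^ k - 1 :=
    le_antisymm (Nat.le_of_dvd hepos (orderOf_dvd_of_pow_eq_one h1)) hle
  have hr0 : r ≠ 0 := by
    intro h
    rw [h, zero_pow (Nat.pos_iff_ne_zero.mp hepos)] at h1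
    exact zero_ne_one h1
  set u : Kˣ := Units.mk0 r hr0 with hu
  have hordu : orderOf u = 2 ^ k - 1 := by
    rw [← hord, ← orderOf_units]; rfl
  have htop : Subgroup.zpowers u = ⊤ := by
    apply Subgroup.eq_top_of_card_eq
    rw [Nat.card_zpowers, hordu, Nat.card_eq_fintype_card, Fintype.card_units, hcard]
  -- mk f is a unit
  have hfu : IsUnit (AdjoinRoot.mk q f) := by
    have h := EuclideanDomain.gcd_eq_gcd_ab q f
    rw [hgcd] at h
    have := congrArg (AdjoinRoot.mk q) h
    rw [map_one, map_add, map_mul, map_mul, AdjoinRoot.mk_self, zero_mul, zero_add] at this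
    exact IsUnit.of_mul_eq_one _ this.symm
  obtain ⟨v, hv⟩ := hfu
  have hvmem : v ∈ Submonoid.powers u := by
    rw [mem_powers_iff_mem_zpowers, htop]
    trivial
  obtain ⟨j, hj⟩ := (Submonoid.mem_powers_iff v u).mp hvmem
  refine ⟨j, AdjoinRoot.mk_eq_zero.mp ?_⟩
  have : AdjoinRoot.mk q f = r ^ j := by
    rw [← hv, ← hj]
    simp [hu]
  rw [map_sub, map_pow, AdjoinRoot.mk_X, this, sub_self]

/-- Generalized shift-and-add property for m-sequences. -/
theorem shift_and_add (q : Polynomial (ZMod 2)) (k : ℕ) (hq : IsPrimitivePoly q k)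
    (s : ℕ → ZMod 2) (hs : s ≠ 0) (hqs : polyApp q s = 0)
    (f : Polynomial (ZMod 2)) (hgcd : EuclideanDomain.gcd q f = 1) :
    ∃ j : ℕ, ∀ i, polyApp f s i = s (i + j) := by
  obtain ⟨hirr, hdeg, hc0, hepos, hdvd, hmin⟩ := hq
  obtain ⟨j, hdj⟩ := shift_and_add_main q k hirr hdeg hc0 hepos hdvd hmin f hgcd
  refine ⟨j, fun i => ?_⟩
  have h0 : polyApp (f - X ^ j) s i = 0 := polyApp_dvd_zero q _ s hqs hdj i
  have hXj : polyApp (X ^ j) s i = s (i + j) := by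
    rw [show (X ^ j : Polynomial (ZMod 2)) = X ^ j * 1 by ring, polyApp_Xpow_mul, polyApp_one]
  have hadd := polyApp_add (f - X ^ j) (X ^ j) s i
  rw [sub_add_cancel] at hadd
  rw [hadd, h0, hXj, zero_add]
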